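/- (Deterministic Lasso oracle bound.) Let p ≥ 1, S₀ ⊆ {1,…,p} with |S₀| = s₀ ≥ 1, let β₀ ∈ ℝᵖ be supported on S₀, let β̂ ∈ ℝᵖ and set d = β̂ − β₀. Let Σ̂ be a p × p positive semidefinite real matrix, λ > 0 and Λ > 0. Assume: (i) the basic inequality dᵀΣ̂d + λ‖β̂‖₁ ≤ (λ/2)‖d‖₁ + λ‖β₀‖₁ holds; (ii) the restricted eigenvalue condition holds: for every δ ∈ ℝᵖ with ‖δ_{S₀ᶜ}‖₁ ≤ 3√s₀·‖δ_{S₀}‖₂ one has δᵀΣ̂δ ≥ Λ²‖δ_{S₀}‖₂². Then ‖d_{S₀ᶜ}‖₁ ≤ 3‖d_{S₀}‖₁, ‖d‖₁ ≤ 2λs₀/Λ², and dᵀΣ̂d ≤ 4λ²s₀/Λ². -/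

import Mathlib

open Matrix

/-- The ℓ¹ norm of a vector in `ℝᵖ`. -/
noncomputable def l1Norm {p : ℕ} (v : Fin p → ℝ) : ℝ := ∑ j, |v j|

/-- The restriction of a vector to a coordinate set `T` (zeroing the others). -/
def restrictTo {p : ℕ} (v : Fin p → ℝ) (T : Finset (Fin p)) : Fin p → ℝ :=
  fun j => if j ∈ T then v j else 0

/-- The ℓ² norm of the restriction of a vector to a coordinate set. -/
noncomputable def l2NormOn {p : ℕ} (v : Fin p → ℝ) (T : Finset (Fin p)) : ℝ :=
  Real.sqrt (∑ j ∈ T, (v j) ^ 2)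

lemma l1Norm_restrict {p : ℕ} (v : Fin p → ℝ) (T : Finset (Fin p)) :
    l1Norm (restrictTo v T) = ∑ j ∈ T, |v j| := by
  unfold l1Norm restrictTo
  rw [← Finset.sum_add_sum_compl T]
  have h1 : ∀ j ∈ T, |if j ∈ T then v j else 0| = |v j| := fun j hj => by simp [hj]
  have h2 : ∑ j ∈ Tᶜ, |if j ∈ T then v j else 0| = 0 :=
    Finset.sum_eq_zero fun j hj => by simp [Finset.mem_compl.mp hj]
  rw [Finset.sum_congr rfl h1, h2, add_zero]

lemma l1Norm_split {p : ℕ} (v : Fin p → ℝ) (T : Finset (Fin p)) :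
    l1Norm v = (∑ j ∈ T, |v j|) + ∑ j ∈ Tᶜ, |v j| := by
  unfold l1Norm
  rw [Finset.sum_add_sum_compl]

set_option maxHeartbeats 1600000 in
/-- Deterministic Lasso oracle bound: under the basic inequality and the
restricted eigenvalue condition, the Lasso error `d = β̂ − β₀` lies in the
restricted cone and satisfies `‖d‖₁ ≤ 2λs₀/Λ²` and `dᵀΣ̂d ≤ 4λ²s₀/Λ²`. -/
theorem lasso_oracle_bound
    {p : ℕ} (hp : 1 ≤ p) (S₀ : Finset (Fin p)) (s₀ : ℕ) (hs₀ : S₀.card = s₀)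
    (hs₀1 : 1 ≤ s₀)
    (β₀ : Fin p → ℝ) (hβ₀supp : ∀ j ∉ S₀, β₀ j = 0)
    (βhat : Fin p → ℝ) (d : Fin p → ℝ) (hd : d = βhat - β₀)
    (Sighat : Matrix (Fin p) (Fin p) ℝ) (hPSD : Sighat.PosSemidef)
    (lam Λ : ℝ) (hlam : 0 < lam) (hΛ : 0 < Λ)
    -- (i) basic inequality
    (hbasic : d ⬝ᵥ Sighat.mulVec d + lam * l1Norm βhat ≤
      lam / 2 * l1Norm d + lam * l1Norm β₀)
    -- (ii) restricted eigenvalue condition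
    (hRE : ∀ δ : Fin p → ℝ,
      l1Norm (restrictTo δ S₀ᶜ) ≤ 3 * Real.sqrt s₀ * l2NormOn δ S₀ →
      Λ ^ 2 * (l2NormOn δ S₀) ^ 2 ≤ δ ⬝ᵥ Sighat.mulVec δ) :
    l1Norm (restrictTo d S₀ᶜ) ≤ 3 * l1Norm (restrictTo d S₀) ∧
      l1Norm d ≤ 2 * lam * s₀ / Λ ^ 2 ∧
      d ⬝ᵥ Sighat.mulVec d ≤ 4 * lam ^ 2 * s₀ / Λ ^ 2 := by
  set Q : ℝ := d ⬝ᵥ Sighat.mulVec d with hQdef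
  have hQ0 : 0 ≤ Q := by simpa using hPSD.dotProduct_mulVec_nonneg d
  -- notation for the two pieces
  set A : ℝ := ∑ j ∈ S₀, |d j| with hA
  set B : ℝ := ∑ j ∈ S₀ᶜ, |d j| with hB
  have hA0 : 0 ≤ A := Finset.sum_nonneg fun j _ => abs_nonneg _
  have hB0 : 0 ≤ B := Finset.sum_nonneg fun j _ => abs_nonneg _
  have hl1d : l1Norm d = A + B := l1Norm_split d S₀
  -- ‖β₀‖₁ = ∑_{S₀} |β₀ j|
  have hβ₀l1 : l1Norm β₀ = ∑ j ∈ S₀, |β₀ j| := by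
    rw [l1Norm_split β₀ S₀]
    have : ∑ j ∈ S₀ᶜ, |β₀ j| = 0 := by
      apply Finset.sum_eq_zero; intro j hj
      rw [hβ₀supp j (Finset.mem_compl.mp hj)]; simp
    rw [this, add_zero]
  -- lower bound on ‖β̂‖₁
  have hbhat : l1Norm β₀ - A + B ≤ l1Norm βhat := by
    rw [l1Norm_split βhat S₀, hβ₀l1]
    have h1 : ∑ j ∈ S₀, |β₀ j| - A ≤ ∑ j ∈ S₀, |βhat j| := by
      rw [hA, ← Finset.sum_sub_distrib]
      apply Finset.sum_le_sum; intro j _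
      have hdj : d j = βhat j - β₀ j := by rw [hd]; rfl
      rw [hdj]
      have := abs_sub_abs_le_abs_sub (β₀ j) (βhat j)
      rw [abs_sub_comm] at this
      linarith
    have h2 : B = ∑ j ∈ S₀ᶜ, |βhat j| := by
      rw [hB]; apply Finset.sum_congr rfl; intro j hj
      have hb0 : β₀ j = 0 := hβ₀supp j (Finset.mem_compl.mp hj)
      rw [hd]; simp [hb0]
    linarith [h1, le_of_eq h2]
  -- key inequality (*)
  have hkey : Q + lam / 2 * B ≤ 3 * lam / 2 * A := by
    have := hbasic
    rw [hl1d] at this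
    nlinarith [this, hbhat, hlam.le]
  -- cone condition
  have hcone : l1Norm (restrictTo d S₀ᶜ) ≤ 3 * l1Norm (restrictTo d S₀) := by
    rw [l1Norm_restrict, l1Norm_restrict, ← hA, ← hB]
    nlinarith [hkey, hQ0, hlam]
  refine ⟨hcone, ?_⟩
  -- Cauchy–Schwarz: A ≤ √s₀ · t
  set t : ℝ := l2NormOn d S₀ with ht
  have ht0 : 0 ≤ t := Real.sqrt_nonneg _
  set r : ℝ := Real.sqrt s₀ with hr
  have hr0 : 0 < r := Real.sqrt_pos.mpr (by exact_mod_cast hs₀1)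
  have hr2 : r ^ 2 = s₀ := Real.sq_sqrt (by positivity)
  have hCS : A ≤ r * t := by
    have h1 : A ^ 2 ≤ (s₀ : ℝ) * ∑ j ∈ S₀, (d j) ^ 2 := by
      have := sq_sum_le_card_mul_sum_sq (s := S₀) (f := fun j => |d j|)
      simpa [hs₀, sq_abs] using this
    have h2 : (r * t) ^ 2 = (s₀ : ℝ) * ∑ j ∈ S₀, (d j) ^ 2 := by
      rw [mul_pow, hr2, ht]
      unfold l2NormOn
      rw [Real.sq_sqrt (Finset.sum_nonneg fun j _ => sq_nonneg _)]
    have h3 := Real.sqrt_le_sqrt (h1.trans_eq h2.symm)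
    rwa [Real.sqrt_sq hA0, Real.sqrt_sq (by positivity)] at h3
  -- RE applied to d
  have hREd : Λ ^ 2 * t ^ 2 ≤ Q := by
    apply hRE d
    rw [l1Norm_restrict, ← hB, ← ht]
    calc B ≤ 3 * A := by nlinarith [hkey, hQ0, hlam]
    _ ≤ 3 * (r * t) := by linarith [hCS]
    _ = 3 * r * t := by ring
  -- Λ² t ≤ 2 λ r
  have hQle : Q ≤ 2 * lam * r * t := by nlinarith [hkey, hCS, hlam, hB0]
  have hΛt : Λ ^ 2 * t ≤ 2 * lam * r := by
    rcases eq_or_lt_of_le ht0 with h | h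
    · rw [← h, mul_zero]; positivity
    · have h2 : Λ ^ 2 * t * t ≤ 2 * lam * r * t := by nlinarith [hREd, hQle]
      exact le_of_mul_le_mul_right h2 h
  clear_value Q A B t r
  clear hbasic hRE hbhat hβ₀l1 hβ₀supp hd hcone hQdef hA hB ht hr hs₀ hPSD hQ0
  constructor
  · -- ℓ¹ bound
    rw [hl1d, le_div_iff₀ (by positivity), ← hr2]
    have hAB : Q + lam / 2 * (A + B) ≤ 2 * lam * (r * t) := by
      nlinarith [hkey, hCS, hlam]
    have h2 : Q * Λ ^ 2 + lam / 2 * (A + B) * Λ ^ 2 ≤ 2 * lam * (r * t) * Λ ^ 2 := by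
      nlinarith [hAB, sq_nonneg Λ]
    have h3 : Λ ^ 2 * (Λ ^ 2 * t ^ 2) ≤ Λ ^ 2 * Q := by
      nlinarith [hREd, sq_nonneg Λ]
    nlinarith [h2, h3, sq_nonneg (Λ ^ 2 * t - lam * r), hlam]
  · -- prediction bound
    rw [le_div_iff₀ (by positivity), ← hr2]
    have e1 : Q * Λ ^ 2 ≤ 2 * lam * r * (Λ ^ 2 * t) := by nlinarith [hQle, sq_nonneg Λ]
    have e2 : 2 * lam * r * (Λ ^ 2 * t) ≤ 2 * lam * r * (2 * lam * r) := by
      nlinarith [hΛt, hlam, hr0]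
    nlinarith [e1, e2]
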